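/- For every integer r ≥ 1 and every integer k ≥ 1, the φ-mixing coefficients of the finite process (X_i^(r))_{1≤i≤λ(r)} satisfy φ(k) ≤ 2·((b−1)/b)^{k/2 − 1}. -/

import Mathlib

open Filter Topology MeasureTheory

noncomputable section

/-- Sum of the base-`b` digits of `n`. -/
def digitSum (b n : ℕ) : ℕ := (Nat.digits b n).sum

/-- `Δ^(r)(n) = s(n+r) - s(n)`, the variation of the base-`b` digit sum when adding `r`. -/
def delta (b r n : ℕ) : ℤ := (digitSum b (n + r) : ℤ) - (digitSum b n : ℤ)

/-- The value `x_0 + x_1 b + ⋯ + x_k b^k` given by the first `k+1` digits of a `b`-adic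
integer `x : ℕ → Fin b`. -/
def valk (b : ℕ) (x : ℕ → Fin b) (k : ℕ) : ℕ :=
  ∑ i ∈ Finset.range (k + 1), (x i : ℕ) * b ^ i

/-- `Δ_k^(r)(x) = s_k(x+r) - s_k(x)`: since carries propagate upwards, the first `k+1`
digits of `x + r` are the base-`b` digits of `(x_0 + x_1 b + ⋯ + x_k b^k + r) % b^(k+1)`. -/
def deltak (b r k : ℕ) (x : ℕ → Fin b) : ℤ :=
  (digitSum b ((valk b x k + r) % b ^ (k + 1)) : ℤ) - (digitSum b (valk b x k) : ℤ)

/-- `Δ^(r)(x) = lim_k Δ_k^(r)(x)`; the sequence is eventually constant for `ℙ`-a.e. `x`. -/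
def deltaX (b r : ℕ) (x : ℕ → Fin b) : ℤ :=
  limUnder atTop fun k => deltak b r k x

/-- Decomposition of a digit list (least significant digit first) into blocks: adjacent equal
digits that are `0` or `b-1` are grouped together; any other digit forms its own block. -/
def blocksOf (b : ℕ) : List ℕ → List (List ℕ)
  | [] => []
  | d :: l =>
    match blocksOf b l with
    | [] => [[d]]
    | bl :: rest =>
        if bl.head? = some d ∧ (d = 0 ∨ d = b - 1) then (d :: bl) :: rest
        else [d] :: bl :: rest

/-- `λ(r)`: the number of non-zero blocks of the base-`b` expansion of `r`. -/
def lambB (b r : ℕ) : ℕ :=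
  ((blocksOf b (Nat.digits b r)).filter fun bl => bl.head? ≠ some 0).length

/-- Replace the `m` least significant non-zero blocks by blocks of `0`'s. -/
def zeroOutBlocks : ℕ → List (List ℕ) → List (List ℕ)
  | _, [] => []
  | 0, bs => bs
  | m + 1, bl :: bs =>
      if bl.head? = some 0 then bl :: zeroOutBlocks (m + 1) bs
      else (bl.map fun _ => 0) :: zeroOutBlocks m bs

/-- `r[i]`: the integer obtained from the base-`b` expansion of `r` by replacing each
non-zero block `B_k` with `k > i` (blocks being numbered from the most significant digits,
i.e. the `λ(r) - i` least significant non-zero blocks) by a block of `0`'s of the same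
length.  In particular `r[0] = 0` and `r[λ(r)] = r`. -/
def rPart (b r i : ℕ) : ℕ :=
  Nat.ofDigits b (List.flatten (zeroOutBlocks (lambB b r - i) (blocksOf b (Nat.digits b r))))

/-- Addition of a natural number `m` to a `b`-adic integer `x` (digitwise, with carries):
the `k`-th digit of `x + m` only depends on `x_0, …, x_k` and `m`. -/
def addNat (b : ℕ) (hb : 0 < b) (x : ℕ → Fin b) (m : ℕ) : ℕ → Fin b :=
  fun k => ⟨(valk b x k + m) / b ^ k % b, Nat.mod_lt _ hb⟩

/-- The process `X_i^(r) := Δ^(r[i]-r[i-1]) ∘ T^(r[i-1])` on the `b`-adic integers. -/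
def Xproc (b : ℕ) (hb : 0 < b) (r i : ℕ) (x : ℕ → Fin b) : ℤ :=
  deltaX b (rPart b r i - rPart b r (i - 1)) (addNat b hb x (rPart b r (i - 1)))

lemma digitSum_zero (b : ℕ) : digitSum b 0 = 0 := by simp [digitSum]

lemma digitSum_add_pow_mul {b : ℕ} (hb : 2 ≤ b) (m : ℕ) :
    ∀ a q : ℕ, a < b ^ m → digitSum b (a + b ^ m * q) = digitSum b a + digitSum b q := by
  induction m with
  | zero =>
      intro a q ha
      have ha0 : a = 0 := by simpa using ha
      subst ha0
      simp [digitSum]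
  | succ m ih =>
      intro a q ha
      rcases Nat.eq_zero_or_pos (a + b ^ (m+1) * q) with h0 | h0
      · have ha0 : a = 0 := by omega
        have hq0 : b ^ (m+1) * q = 0 := by omega
        simp [ha0, hq0, digitSum]
        have : q = 0 := by
          rcases Nat.mul_eq_zero.1 hq0 with h | h
          · exact absurd h (by positivity)
          · exact h
        simp [this]
      · have hb1 : 1 < b := hb
        have hds : digitSum b (a + b ^ (m+1) * q)
            = (a + b ^ (m+1) * q) % b + digitSum b ((a + b ^ (m+1) * q) / b) := by
          unfold digitSum
          rw [Nat.digits_def' hb1 h0]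
          simp
        have hmod : (a + b ^ (m+1) * q) % b = a % b := by
          have : b ^ (m+1) * q = b * (b ^ m * q) := by ring
          rw [this, Nat.add_mul_mod_self_left]
        have hdiv : (a + b ^ (m+1) * q) / b = a / b + b ^ m * q := by
          have : b ^ (m+1) * q = b * (b ^ m * q) := by ring
          rw [this, Nat.add_mul_div_left _ _ (by omega : 0 < b)]
        have hab : a / b < b ^ m := by
          apply Nat.div_lt_of_lt_mul
          calc a < b ^ (m+1) := ha
          _ = b * b ^ m := by ring
        rw [hds, hmod, hdiv, ih _ _ hab]
        rcases Nat.eq_zero_or_pos a with ha0 | ha0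
        · simp [ha0, digitSum]
        · have : digitSum b a = a % b + digitSum b (a / b) := by
            unfold digitSum
            rw [Nat.digits_def' hb1 ha0]
            simp
          omega

lemma valk_succ (b : ℕ) (x : ℕ → Fin b) (k : ℕ) :
    valk b x (k+1) = valk b x k + (x (k+1) : ℕ) * b ^ (k+1) := by
  simp [valk, Finset.sum_range_succ]

def uM (b M : ℕ) (x : ℕ → Fin b) : ℕ := ∑ i ∈ Finset.range M, (x i : ℕ) * b ^ i

lemma uM_lt {b : ℕ} (hb : 0 < b) (M : ℕ) (x : ℕ → Fin b) : uM b M x < b ^ M := by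
  induction M with
  | zero => simp [uM]
  | succ M ih =>
      have hx : (x M : ℕ) < b := (x M).isLt
      have : uM b (M+1) x = uM b M x + (x M : ℕ) * b ^ M := by
        simp [uM, Finset.sum_range_succ]
      rw [this]
      have : (x M : ℕ) * b ^ M ≤ (b - 1) * b ^ M := by
        apply Nat.mul_le_mul_right
        omega
      have hpow : b ^ (M+1) = b * b ^ M := by ring
      have hbM : 0 < b ^ M := by positivity
      nlinarith

lemma valk_split (b : ℕ) (x : ℕ → Fin b) {M k : ℕ} (hk : M ≤ k) :
    valk b x k = uM b M x + b ^ M * ∑ i ∈ Finset.range (k + 1 - M), (x (M + i) : ℕ) * b ^ i := by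
  have h : k + 1 = M + (k + 1 - M) := by omega
  rw [valk, h, Finset.sum_range_add, Finset.mul_sum]
  have h2 : M + (k + 1 - M) - M = k + 1 - M := by omega
  rw [h2]
  congr 1
  apply Finset.sum_congr rfl
  intro i _
  rw [pow_add]
  ring


lemma valk_addNat {b : ℕ} (hb : 0 < b) (x : ℕ → Fin b) (m : ℕ) :
    ∀ k, valk b (addNat b hb x m) k = (valk b x k + m) % b ^ (k + 1) := by
  intro k
  induction k with
  | zero =>
      simp [valk, addNat]
  | succ k ih =>
      have hadd : ((addNat b hb x m (k+1)) : ℕ) = (valk b x (k+1) + m) / b ^ (k+1) % b := rfl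
      rw [valk_succ, ih, hadd]
      have hmod : (valk b x k + m) % b ^ (k+1) = (valk b x (k+1) + m) % b ^ (k+1) := by
        rw [valk_succ]
        have h3 : valk b x k + (x (k+1) : ℕ) * b ^ (k+1) + m
            = valk b x k + m + (x (k+1) : ℕ) * b ^ (k+1) := by ring
        rw [h3, Nat.add_mul_mod_self_right]
      rw [hmod]
      have hp : b ^ (k+1+1) = b ^ (k+1) * b := by ring
      rw [hp, Nat.mod_mul]
      ring

lemma deltak_addNat_eval {b : ℕ} (hb : 0 < b) (x : ℕ → Fin b) (a t k : ℕ) :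
    deltak b t k (addNat b hb x a) =
      (digitSum b ((valk b x k + a + t) % b ^ (k+1)) : ℤ)
        - digitSum b ((valk b x k + a) % b ^ (k+1)) := by
  unfold deltak
  rw [valk_addNat, Nat.mod_add_mod]

lemma dS_mod {b : ℕ} (hb : 2 ≤ b) {M k u : ℕ} (W : ℕ) (hu : u < b ^ M) (hk : M ≤ k) :
    digitSum b ((u + b ^ M * W) % b ^ (k+1))
      = digitSum b u + digitSum b (W % b ^ (k + 1 - M)) := by
  have hpow : b ^ (k+1) = b ^ M * b ^ (k+1-M) := by
    rw [← pow_add]; congr 1; omega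
  rw [hpow, Nat.mod_mul]
  have h1 : (u + b ^ M * W) % b ^ M = u := by
    rw [Nat.add_mul_mod_self_left, Nat.mod_eq_of_lt hu]
  have h2 : (u + b ^ M * W) / b ^ M = W := by
    rw [Nat.add_mul_div_left _ _ (by positivity : 0 < b ^ M),
        Nat.div_eq_of_lt hu, Nat.zero_add]
  rw [h1, h2, digitSum_add_pow_mul hb M u _ hu]

lemma deltak_high_eq {b : ℕ} (hb2 : 2 ≤ b) (hb : 0 < b) {M a t : ℕ}
    (ha : b ^ M ∣ a) (ht : b ^ M ∣ t) (x y : ℕ → Fin b)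
    (hxy : ∀ j, M ≤ j → x j = y j) {k : ℕ} (hk : M ≤ k) :
    deltak b t k (addNat b hb x a) = deltak b t k (addNat b hb y a) := by
  obtain ⟨aH, rfl⟩ := ha
  obtain ⟨tH, rfl⟩ := ht
  have key : ∀ z : ℕ → Fin b,
      deltak b (b^M*tH) k (addNat b hb z (b^M*aH)) =
      (digitSum b ((∑ i ∈ Finset.range (k+1-M), (z (M+i):ℕ) * b^i + aH + tH) % b^(k+1-M)) : ℤ)
      - digitSum b ((∑ i ∈ Finset.range (k+1-M), (z (M+i):ℕ) * b^i + aH) % b^(k+1-M)) := by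
    intro z
    rw [deltak_addNat_eval, valk_split b z hk]
    set W := ∑ i ∈ Finset.range (k+1-M), (z (M+i):ℕ) * b^i with hW
    have e1 : uM b M z + b^M * W + b^M*aH + b^M*tH = uM b M z + b^M * (W + aH + tH) := by ring
    have e2 : uM b M z + b^M * W + b^M*aH = uM b M z + b^M * (W + aH) := by ring
    rw [e1, e2, dS_mod hb2 _ (uM_lt hb M z) hk, dS_mod hb2 _ (uM_lt hb M z) hk]
    push_cast
    ring
  rw [key x, key y]
  have hw : ∑ i ∈ Finset.range (k+1-M), (x (M+i) : ℕ) * b ^ i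
      = ∑ i ∈ Finset.range (k+1-M), (y (M+i) : ℕ) * b ^ i := by
    apply Finset.sum_congr rfl
    intro i _
    rw [hxy _ (by omega)]
  rw [hw]

lemma deltak_low_eval {b : ℕ} (hb2 : 2 ≤ b) (hb : 0 < b) {M aL aH t : ℕ}
    (haL : aL < b ^ M) (haLt : aL + t < b ^ M) (x : ℕ → Fin b)
    (hQ : (uM b M x + aL + t) / b ^ M = (uM b M x + aL) / b ^ M) {k : ℕ} (hk : M ≤ k) :
    deltak b t k (addNat b hb x (aL + b ^ M * aH)) =
      (digitSum b ((uM b M x + aL + t) % b ^ M) : ℤ)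
        - digitSum b ((uM b M x + aL) % b ^ M) := by
  have hBpos : 0 < b ^ M := by positivity
  rw [deltak_addNat_eval, valk_split b x hk]
  set u := uM b M x with hu
  set W := ∑ i ∈ Finset.range (k+1-M), (x (M+i):ℕ) * b^i with hW
  have hdm1 : b^M * ((u+aL+t)/b^M) + (u+aL+t) % b^M = u + aL + t := Nat.div_add_mod _ _
  have hdm2 : b^M * ((u+aL)/b^M) + (u+aL) % b^M = u + aL := Nat.div_add_mod _ _
  have e1 : u + b^M*W + (aL + b^M*aH) + t
      = (u+aL+t) % b^M + b^M * ((u+aL+t)/b^M + W + aH) := by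
    rw [Nat.mul_add, Nat.mul_add]
    omega
  have e2 : u + b^M*W + (aL + b^M*aH)
      = (u+aL) % b^M + b^M * ((u+aL)/b^M + W + aH) := by
    rw [Nat.mul_add, Nat.mul_add]
    omega
  rw [e1, e2, dS_mod hb2 _ (Nat.mod_lt _ hBpos) hk, dS_mod hb2 _ (Nat.mod_lt _ hBpos) hk, hQ]
  push_cast
  ring

lemma Xproc_high_eq {b : ℕ} (hb2 : 2 ≤ b) (hb : 0 < b) (r i M : ℕ)
    (ha : b ^ M ∣ rPart b r (i-1)) (ht : b ^ M ∣ (rPart b r i - rPart b r (i-1)))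
    (x y : ℕ → Fin b) (hxy : ∀ j, M ≤ j → x j = y j) :
    Xproc b hb r i x = Xproc b hb r i y := by
  unfold Xproc deltaX limUnder
  congr 1
  apply Filter.map_congr
  filter_upwards [eventually_ge_atTop M] with k hk
  exact deltak_high_eq hb2 hb ha ht x y hxy hk

lemma Xproc_low_eval {b : ℕ} (hb2 : 2 ≤ b) (hb : 0 < b) (r i : ℕ) {M aL aH t : ℕ}
    (hr : rPart b r (i-1) = aL + b ^ M * aH)
    (htv : rPart b r i - rPart b r (i-1) = t)
    (haL : aL < b ^ M) (haLt : aL + t < b ^ M) (x : ℕ → Fin b)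
    (hQ : (uM b M x + aL + t) / b ^ M = (uM b M x + aL) / b ^ M) :
    Xproc b hb r i x = (digitSum b ((uM b M x + aL + t) % b ^ M) : ℤ)
        - digitSum b ((uM b M x + aL) % b ^ M) := by
  unfold Xproc deltaX
  rw [htv, hr]
  apply Filter.Tendsto.limUnder_eq
  apply Filter.Tendsto.congr' _ tendsto_const_nhds
  filter_upwards [eventually_ge_atTop M] with k hk
  exact (deltak_low_eval hb2 hb haL haLt x hQ hk).symm

def nzB (bs : List (List ℕ)) : ℕ := (bs.filter fun bl => bl.head? ≠ some 0).length

lemma nzB_nil : nzB [] = 0 := rfl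

lemma nzB_cons (bl : List ℕ) (bs : List (List ℕ)) :
    nzB (bl :: bs) = (if bl.head? = some 0 then 0 else 1) + nzB bs := by
  by_cases h : bl.head? = some 0 <;> simp [nzB, List.filter_cons, h] <;> omega

lemma nzB_append (a c : List (List ℕ)) : nzB (a ++ c) = nzB a + nzB c := by
  simp [nzB, List.filter_append]

lemma zOB_nil (m : ℕ) : zeroOutBlocks m [] = [] := by cases m <;> rfl

lemma zOB_zero (bs : List (List ℕ)) : zeroOutBlocks 0 bs = bs := by cases bs <;> rfl

lemma zOB_succ_cons (m : ℕ) (bl : List ℕ) (bs : List (List ℕ)) :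
    zeroOutBlocks (m+1) (bl :: bs)
      = if bl.head? = some 0 then bl :: zeroOutBlocks (m + 1) bs
        else (bl.map fun _ => 0) :: zeroOutBlocks m bs := rfl

/-- flatten of blocksOf recovers the list -/
lemma blocksOf_flatten (b : ℕ) : ∀ l : List ℕ, (blocksOf b l).flatten = l := by
  intro l
  induction l with
  | nil => rfl
  | cons d l ih =>
      show (blocksOf b (d :: l)).flatten = d :: l
      rw [blocksOf]
      rcases h : blocksOf b l with _ | ⟨bl, rest⟩
      · simp only [h] at ih
        simp at ih
        simp [ih]
      · rw [h] at ih
        by_cases hc : bl.head? = some d ∧ (d = 0 ∨ d = b - 1)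
        · simp only [hc, if_pos, and_self]
          simp only [List.flatten_cons] at ih ⊢
          simp [← ih]
        · simp only [if_neg hc]
          simp only [List.flatten_cons] at ih ⊢
          simp [← ih]

lemma blocksOf_ne_nil (b : ℕ) : ∀ l : List ℕ, ∀ bl ∈ blocksOf b l, bl ≠ [] := by
  intro l
  induction l with
  | nil => intro bl h; simp [blocksOf] at h
  | cons d l ih =>
      intro bl hbl
      rw [blocksOf] at hbl
      rcases h : blocksOf b l with _ | ⟨bl0, rest⟩ <;> rw [h] at hbl
      · simp at hbl
        simp [hbl]
      · by_cases hc : bl0.head? = some d ∧ (d = 0 ∨ d = b - 1)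
        · simp only [hc, and_self, if_pos] at hbl
          rcases List.mem_cons.1 hbl with h1 | h1
          · simp [h1]
          · exact ih bl (h ▸ List.mem_cons_of_mem _ h1)
        · simp only [if_neg hc] at hbl
          rcases List.mem_cons.1 hbl with h1 | h1
          · simp [h1]
          · exact ih bl (h ▸ h1)

lemma blocksOf_zero_head (b : ℕ) : ∀ l : List ℕ, ∀ bl ∈ blocksOf b l,
    bl.head? = some 0 → ∀ d ∈ bl, d = 0 := by
  intro l
  induction l with
  | nil => intro bl h; simp [blocksOf] at h
  | cons d l ih =>
      intro bl hbl hhead e he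
      rw [blocksOf] at hbl
      rcases h : blocksOf b l with _ | ⟨bl0, rest⟩ <;> rw [h] at hbl
      · simp at hbl
        subst hbl
        simp at hhead he
        omega
      · by_cases hc : bl0.head? = some d ∧ (d = 0 ∨ d = b - 1)
        · simp only [hc, and_self, if_pos] at hbl
          rcases List.mem_cons.1 hbl with h1 | h1
          · subst h1
            simp at hhead
            subst hhead
            rcases List.mem_cons.1 he with h2 | h2
            · exact h2
            · exact ih bl0 (h ▸ List.mem_cons_self) (by rw [hc.1]) e h2
          · exact ih bl (h ▸ List.mem_cons_of_mem _ h1) hhead e he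
        · simp only [if_neg hc] at hbl
          rcases List.mem_cons.1 hbl with h1 | h1
          · subst h1
            simp at hhead he
            omega
          · exact ih bl (h ▸ h1) hhead e he

lemma map_zero_eq_self {bl : List ℕ} (h : ∀ d ∈ bl, d = 0) : bl.map (fun _ => 0) = bl := by
  induction bl with
  | nil => rfl
  | cons a t ih =>
      simp only [List.map_cons]
      rw [ih (fun d hd => h d (List.mem_cons_of_mem _ hd)), h a (List.mem_cons_self)]

lemma nzB_zero_iff {bs : List (List ℕ)} (h : nzB bs = 0) :
    ∀ bl ∈ bs, bl.head? = some 0 := by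
  intro bl hbl
  by_contra hc
  have hmem : bl ∈ bs.filter fun bl => bl.head? ≠ some 0 := by
    simp [List.mem_filter, hbl, hc]
  have hlen : ((bs.filter fun bl => bl.head? ≠ some 0)).length ≠ 0 := by
    intro h0
    rw [List.length_eq_zero_iff] at h0
    rw [h0] at hmem
    simp at hmem
  exact hlen h

/-- Z1 -/
lemma zOB_append_left : ∀ (bs1 : List (List ℕ)) (bs2 : List (List ℕ)) (m : ℕ), m ≤ nzB bs1 →
    zeroOutBlocks m (bs1 ++ bs2) = zeroOutBlocks m bs1 ++ bs2 := by
  intro bs1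
  induction bs1 with
  | nil =>
      intro bs2 m hm
      simp [nzB] at hm
      simp [hm, zOB_zero, zOB_nil]
  | cons bl t ih =>
      intro bs2 m hm
      cases m with
      | zero => simp [zOB_zero]
      | succ m =>
          rw [List.cons_append, zOB_succ_cons, zOB_succ_cons]
          by_cases h : bl.head? = some 0
          · rw [if_pos h, if_pos h, ih bs2 (m+1) (by rw [nzB_cons, if_pos h] at hm; omega)]
            simp
          · rw [if_neg h, if_neg h, ih bs2 m (by rw [nzB_cons, if_neg h] at hm; omega)]
            simp

/-- Z2 -/
lemma zOB_append_right : ∀ (bs1 : List (List ℕ)) (bs2 : List (List ℕ)) (m : ℕ),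
    nzB bs1 ≤ m → (∀ bl ∈ bs1, bl.head? = some 0 → ∀ d ∈ bl, d = 0) →
    zeroOutBlocks m (bs1 ++ bs2)
      = bs1.map (fun bl => bl.map (fun _ => 0)) ++ zeroOutBlocks (m - nzB bs1) bs2 := by
  intro bs1
  induction bs1 with
  | nil => intro bs2 m hm hz; simp [nzB]
  | cons bl t ih =>
      intro bs2 m hm hz
      cases m with
      | zero =>
          have h0 : nzB (bl :: t) = 0 := by omega
          have hall := nzB_zero_iff h0
          rw [zOB_zero]
          have : (bl :: t).map (fun bl => bl.map (fun _ => 0)) = bl :: t := by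
            apply List.map_congr_left ?_ |>.trans (List.map_id _)
            · intro a ha
              exact map_zero_eq_self (hz a ha (hall a ha))
          rw [this, Nat.zero_sub, zOB_zero]
      | succ m =>
          rw [List.cons_append, zOB_succ_cons]
          by_cases h : bl.head? = some 0
          · rw [if_pos h]
            have hnz : nzB (bl :: t) = nzB t := by rw [nzB_cons, if_pos h]; omega
            rw [ih bs2 (m+1) (by omega) (fun a ha => hz a (List.mem_cons_of_mem _ ha)), hnz]
            simp only [List.map_cons, List.cons_append]
            rw [map_zero_eq_self (hz bl (List.mem_cons_self) h)]
          · rw [if_neg h]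
            have hnz : nzB (bl :: t) = nzB t + 1 := by rw [nzB_cons, if_neg h]; omega
            rw [ih bs2 m (by omega) (fun a ha => hz a (List.mem_cons_of_mem _ ha))]
            simp only [List.map_cons, List.cons_append]
            have he : m + 1 - nzB (bl :: t) = m - nzB t := by omega
            rw [he]

/-- Z4 : lengths preserved -/
lemma zOB_flatten_length : ∀ (bs : List (List ℕ)) (m : ℕ),
    (zeroOutBlocks m bs).flatten.length = bs.flatten.length := by
  intro bs
  induction bs with
  | nil => intro m; rw [zOB_nil]
  | cons bl t ih =>
      intro m
      cases m with
      | zero => rw [zOB_zero]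
      | succ m =>
          rw [zOB_succ_cons]
          by_cases h : bl.head? = some 0
          · rw [if_pos h]; simp [ih]
          · rw [if_neg h]; simp [ih]

/-- digits of zeroed lists are 0 or original -/
lemma zOB_flatten_mem : ∀ (bs : List (List ℕ)) (m : ℕ) (d : ℕ),
    d ∈ (zeroOutBlocks m bs).flatten → d = 0 ∨ d ∈ bs.flatten := by
  intro bs
  induction bs with
  | nil => intro m d h; rw [zOB_nil] at h; simp at h
  | cons bl t ih =>
      intro m d h
      cases m with
      | zero => rw [zOB_zero] at h; right; exact h
      | succ m =>
          rw [zOB_succ_cons] at h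
          by_cases hh : bl.head? = some 0
          · rw [if_pos hh] at h
            simp only [List.flatten_cons, List.mem_append] at h ⊢
            rcases h with h | h
            · right; left; exact h
            · rcases ih (m+1) d h with h1 | h1
              · left; exact h1
              · right; right; exact h1
          · rw [if_neg hh] at h
            simp only [List.flatten_cons, List.mem_append] at h ⊢
            rcases h with h | h
            · left
              simp at h
              exact h.2
            · rcases ih m d h with h1 | h1
              · left; exact h1
              · right; right; exact h1

lemma ofDigits_map_zero (b : ℕ) (l : List ℕ) : Nat.ofDigits b (l.map (fun _ => 0)) = 0 := by
  induction l with
  | nil => rfl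
  | cons a t ih =>
      rw [List.map_cons, Nat.ofDigits_cons, ih]
      simp

/-- Z5 : monotone decreasing in number of zeroed blocks -/
lemma zOB_ofDigits_mono (b : ℕ) : ∀ (bs : List (List ℕ)) (m : ℕ),
    Nat.ofDigits b (zeroOutBlocks (m+1) bs).flatten ≤ Nat.ofDigits b (zeroOutBlocks m bs).flatten := by
  intro bs
  induction bs with
  | nil => intro m; simp [zOB_nil]
  | cons bl t ih =>
      intro m
      cases m with
      | zero =>
          rw [zOB_zero, zOB_succ_cons]
          by_cases h : bl.head? = some 0
          · rw [if_pos h]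
            simp only [List.flatten_cons, Nat.ofDigits_append]
            have := ih 0
            rw [zOB_zero] at this
            gcongr
          · rw [if_neg h]
            simp only [List.flatten_cons, Nat.ofDigits_append, zOB_zero]
            rw [ofDigits_map_zero]
            simp only [List.length_map]
            have : (0:ℕ) ≤ Nat.ofDigits b bl := Nat.zero_le _
            omega
      | succ m =>
          rw [zOB_succ_cons, zOB_succ_cons]
          by_cases h : bl.head? = some 0
          · rw [if_pos h, if_pos h]
            simp only [List.flatten_cons, Nat.ofDigits_append]
            have := ih (m+1)
            gcongr
          · rw [if_neg h, if_neg h]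
            simp only [List.flatten_cons, Nat.ofDigits_append]
            have := ih m
            gcongr

lemma nzB_le_flatten_length : ∀ (bs : List (List ℕ)), (∀ bl ∈ bs, bl ≠ []) →
    nzB bs ≤ bs.flatten.length := by
  intro bs
  induction bs with
  | nil => intro _; simp [nzB]
  | cons bl t ih =>
      intro h
      have h1 : bl.length ≥ 1 := by
        have := h bl (List.mem_cons_self)
        cases bl
        · simp at this
        · simp
      have := ih (fun a ha => h a (List.mem_cons_of_mem _ ha))
      rw [nzB_cons]
      simp only [List.flatten_cons, List.length_append]
      by_cases hh : bl.head? = some 0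
      · rw [if_pos hh]; omega
      · rw [if_neg hh]; omega

lemma exists_nzB_split : ∀ (bs : List (List ℕ)) (n : ℕ), n ≤ nzB bs →
    ∃ bs1 bs2, bs = bs1 ++ bs2 ∧ nzB bs1 = n := by
  intro bs
  induction bs with
  | nil =>
      intro n hn
      simp [nzB] at hn
      exact ⟨[], [], by simp, by simp [nzB, hn]⟩
  | cons bl t ih =>
      intro n hn
      by_cases h : bl.head? = some 0
      · have : n ≤ nzB t := by rw [nzB_cons, if_pos h] at hn; omega
        obtain ⟨bs1, bs2, heq, hnz⟩ := ih n this
        exact ⟨bl :: bs1, bs2, by rw [heq]; rfl, by rw [nzB_cons, if_pos h, hnz]; omega⟩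
      · cases n with
        | zero => exact ⟨[], bl :: t, rfl, rfl⟩
        | succ n =>
            have : n ≤ nzB t := by rw [nzB_cons, if_neg h] at hn; omega
            obtain ⟨bs1, bs2, heq, hnz⟩ := ih n this
            exact ⟨bl :: bs1, bs2, by rw [heq]; rfl, by rw [nzB_cons, if_neg h, hnz]; omega⟩

def restr (b M : ℕ) (x : ℕ → Fin b) : Fin M → Fin b := fun i => x i

def patchF (b M : ℕ) (c : Fin M → Fin b) (x : ℕ → Fin b) : ℕ → Fin b :=
  fun j => if h : j < M then c ⟨j, h⟩ else x j

def swapF (b M : ℕ) (c c' : Fin M → Fin b) (x : ℕ → Fin b) : ℕ → Fin b :=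
  if restr b M x = c then patchF b M c' x
  else if restr b M x = c' then patchF b M c x else x

variable {b M : ℕ}

lemma restr_patchF (c : Fin M → Fin b) (x : ℕ → Fin b) : restr b M (patchF b M c x) = c := by
  funext i
  simp [restr, patchF, i.isLt]

lemma patchF_high (c : Fin M → Fin b) (x : ℕ → Fin b) (j : ℕ) (hj : M ≤ j) :
    patchF b M c x j = x j := by
  have : ¬ j < M := by omega
  simp [patchF, this]

lemma patchF_self {c : Fin M → Fin b} {x : ℕ → Fin b} (h : restr b M x = c) :
    patchF b M c x = x := by
  funext j
  by_cases hj : j < M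
  · simp only [patchF, dif_pos hj]
    rw [← h]
    rfl
  · simp [patchF, hj]

lemma swapF_high (c c' : Fin M → Fin b) (x : ℕ → Fin b) (j : ℕ) (hj : M ≤ j) :
    swapF b M c c' x j = x j := by
  unfold swapF
  split_ifs <;> simp [patchF_high _ _ _ hj]

lemma restr_eq_of_agree {x y : ℕ → Fin b} {N : ℕ} (hMN : M ≤ N)
    (h : ∀ i < N, x i = y i) : restr b M x = restr b M y := by
  funext i
  exact h i (by omega)

lemma swapF_local (c c' : Fin M → Fin b) {x y : ℕ → Fin b} {N : ℕ} (hMN : M ≤ N)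
    (h : ∀ i < N, x i = y i) : ∀ i < N, swapF b M c c' x i = swapF b M c c' y i := by
  intro i hi
  have hr : restr b M x = restr b M y := restr_eq_of_agree hMN h
  unfold swapF
  rw [hr]
  split_ifs with h1 h2
  · by_cases hiM : i < M
    · simp [patchF, hiM]
    · rw [patchF_high _ _ _ (by omega), patchF_high _ _ _ (by omega)]
      exact h i hi
  · by_cases hiM : i < M
    · simp [patchF, hiM]
    · rw [patchF_high _ _ _ (by omega), patchF_high _ _ _ (by omega)]
      exact h i hi
  · exact h i hi

lemma swapF_invol (c c' : Fin M → Fin b) (x : ℕ → Fin b) :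
    swapF b M c c' (swapF b M c c' x) = x := by
  by_cases hcc : c = c'
  · subst hcc
    have key : ∀ z : ℕ → Fin b, swapF b M c c z = z := by
      intro z
      unfold swapF
      split_ifs with h1
      · exact patchF_self h1
      · rfl
    rw [key, key]
  · unfold swapF
    by_cases h1 : restr b M x = c
    · rw [if_pos h1, restr_patchF]
      rw [if_neg (by intro h; exact hcc h.symm), if_pos rfl]
      funext j
      by_cases hj : j < M
      · simp only [patchF, dif_pos hj]
        rw [← h1]; rfl
      · simp [patchF, hj]
    · rw [if_neg h1]
      by_cases h2 : restr b M x = c'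
      · rw [if_pos h2, restr_patchF, if_pos rfl]
        funext j
        by_cases hj : j < M
        · simp only [patchF, dif_pos hj]
          rw [← h2]; rfl
        · simp [patchF, hj]
      · rw [if_neg h2, if_neg h1, if_neg h2]

lemma measurableSet_cylinder (c : Fin M → Fin b) :
    MeasurableSet {x : ℕ → Fin b | restr b M x = c} := by
  have : {x : ℕ → Fin b | restr b M x = c}
      = ⋂ i : Fin M, (fun x : ℕ → Fin b => x (i : ℕ)) ⁻¹' {c i} := by
    ext x
    simp [restr, funext_iff]
  rw [this]
  exact MeasurableSet.iInter fun i =>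
    (measurable_pi_apply (i : ℕ)) (measurableSet_singleton (c i))

lemma measurableSet_cylN (N : ℕ) (a : ℕ → Fin b) :
    MeasurableSet {x : ℕ → Fin b | ∀ i < N, x i = a i} := by
  have : {x : ℕ → Fin b | ∀ i < N, x i = a i}
      = ⋂ (i : ℕ) (_ : i < N), (fun x : ℕ → Fin b => x i) ⁻¹' {a i} := by
    ext x; simp
  rw [this]
  exact MeasurableSet.iInter fun i => MeasurableSet.iInter fun _ =>
    (measurable_pi_apply i) (measurableSet_singleton (a i))

lemma measurable_swapF (c c' : Fin M → Fin b) : Measurable (swapF b M c c') := by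
  apply measurable_pi_lambda
  intro j
  by_cases hj : j < M
  · have he : (fun x => swapF b M c c' x j) = fun x =>
        if restr b M x = c then c' ⟨j, hj⟩ else if restr b M x = c' then c ⟨j, hj⟩ else x j := by
      funext x
      unfold swapF
      split_ifs with h1 h2 <;> simp [patchF, hj]
    rw [he]
    apply Measurable.ite (measurableSet_cylinder c) measurable_const
    exact Measurable.ite (measurableSet_cylinder c') measurable_const (measurable_pi_apply j)
  · have he : (fun x => swapF b M c c' x j) = fun x => x j := by
      funext x
      unfold swapF
      split_ifs <;> simp [patchF, hj]
    rw [he]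
    exact measurable_pi_apply j

def CylSet (b M : ℕ) : Set (Set (ℕ → Fin b)) :=
  {s | ∃ (N : ℕ) (a : ℕ → Fin b), M ≤ N ∧ s = {x | ∀ i < N, x i = a i}}

lemma isPiSystem_cylSet : IsPiSystem (CylSet b M) := by
  rintro s ⟨N, a, hN, rfl⟩ t ⟨N', a', hN', rfl⟩ hne
  obtain ⟨x₀, hx₀s, hx₀t⟩ := hne
  simp only [Set.mem_setOf_eq] at hx₀s hx₀t
  refine ⟨max N N', x₀, le_trans hN (le_max_left _ _), ?_⟩
  ext x
  simp only [Set.mem_inter_iff, Set.mem_setOf_eq]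
  constructor
  · rintro ⟨h1, h2⟩ i hi
    rcases Nat.lt_or_ge i N with h | h
    · rw [h1 i h, hx₀s i h]
    · have : i < N' := by omega
      rw [h2 i this, hx₀t i this]
  · intro h
    constructor
    · intro i hi
      rw [h i (by omega), ← hx₀s i hi]
    · intro i hi
      rw [h i (by omega), ← hx₀t i hi]

lemma coord_preimage_mem (hb : 0 < b) (i : ℕ) (v : Fin b) :
    MeasurableSet[MeasurableSpace.generateFrom (CylSet b M)]
      ((fun x : ℕ → Fin b => x i) ⁻¹' {v}) := by
  set N := max M (i + 1) with hN
  have hi : i < N := by omega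
  have he : ((fun x : ℕ → Fin b => x i) ⁻¹' {v})
      = ⋃ (c : Fin N → Fin b) (_ : c ⟨i, hi⟩ = v),
          {x | ∀ j < N, x j = patchF b N c (fun _ => ⟨0, hb⟩) j} := by
    ext x
    simp only [Set.mem_preimage, Set.mem_singleton_iff, Set.mem_iUnion, Set.mem_setOf_eq]
    constructor
    · intro hx
      refine ⟨restr b N x, hx, ?_⟩
      intro j hj
      simp [patchF, hj, restr]
    · rintro ⟨c, hc, hx⟩
      rw [hx i hi]
      simp [patchF, hi, hc]
  rw [he]
  apply MeasurableSet.iUnion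
  intro c
  apply MeasurableSet.iUnion
  intro _
  exact MeasurableSpace.measurableSet_generateFrom ⟨N, _, le_max_left _ _, rfl⟩

lemma pi_eq_generateFrom_cylSet (hb : 0 < b) :
    (inferInstance : MeasurableSpace (ℕ → Fin b)) = .generateFrom (CylSet b M) := by
  refine le_antisymm ?_ (MeasurableSpace.generateFrom_le ?_)
  · have hcoord : ∀ i : ℕ, @Measurable (ℕ → Fin b) (Fin b)
        (.generateFrom (CylSet b M)) _ (fun x => x i) := by
      intro i
      apply @measurable_to_countable' (Fin b) (ℕ → Fin b) _ _ (.generateFrom (CylSet b M))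
      intro v
      exact coord_preimage_mem hb i v
    have hid : @Measurable (ℕ → Fin b) (ℕ → Fin b)
        (.generateFrom (CylSet b M)) MeasurableSpace.pi id :=
      (@measurable_pi_iff (ℕ → Fin b) ℕ (fun _ => Fin b)
        (.generateFrom (CylSet b M)) (fun _ => inferInstance) id).mpr hcoord
    intro s hs
    exact hid hs
  · rintro s ⟨N, a, hN, rfl⟩
    exact measurableSet_cylN N a

lemma swapF_preimage_cylN (c c' : Fin M → Fin b) {N : ℕ} (hN : M ≤ N) (a : ℕ → Fin b) :
    swapF b M c c' ⁻¹' {x | ∀ i < N, x i = a i}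
      = {x | ∀ i < N, x i = swapF b M c c' a i} := by
  ext x
  simp only [Set.mem_preimage, Set.mem_setOf_eq]
  constructor
  · intro h i hi
    have h2 : ∀ i < N, swapF b M c c' x i = a i := h
    have h3 := swapF_local c c' hN h2
    rw [← swapF_invol c c' x]
    rw [h3 i hi]
  · intro h i hi
    have h3 := swapF_local c c' hN h
    rw [h3 i hi, swapF_invol]

lemma swapF_preimage_cyl_swap (c c' : Fin M → Fin b) :
    swapF b M c c' ⁻¹' {x | restr b M x = c'} = {x | restr b M x = c} := by
  ext x
  simp only [Set.mem_preimage, Set.mem_setOf_eq]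
  unfold swapF
  by_cases h1 : restr b M x = c
  · rw [if_pos h1, restr_patchF]
    simp [h1]
  · rw [if_neg h1]
    by_cases h2 : restr b M x = c'
    · rw [if_pos h2, restr_patchF]
      constructor
      · intro hcc
        exact absurd (hcc ▸ h2) h1
      · intro hc
        exact absurd hc h1
    · rw [if_neg h2]
      constructor
      · intro hc
        exact absurd hc h2
      · intro hc
        exact absurd hc h1

variable (P : Measure (ℕ → Fin b))

lemma P_isProb (hb : 0 < b) (hP : ∀ (k : ℕ) (a : ℕ → Fin b),
      P {x | ∀ i < k, x i = a i} = (1 / (b : ENNReal)) ^ k) :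
    IsProbabilityMeasure P := by
  constructor
  have h := hP 0 (fun _ => ⟨0, hb⟩)
  simp only [pow_zero] at h
  rw [← h]
  congr 1
  ext x
  simp

lemma swapF_map_eq (hb2 : 2 ≤ b) (hP : ∀ (k : ℕ) (a : ℕ → Fin b),
      P {x | ∀ i < k, x i = a i} = (1 / (b : ENNReal)) ^ k)
    (c c' : Fin M → Fin b) :
    Measure.map (swapF b M c c') P = P := by
  have hb : 0 < b := by omega
  haveI := P_isProb P hb hP
  refine (MeasureTheory.ext_of_generate_finite (CylSet b M)
    (pi_eq_generateFrom_cylSet hb) (isPiSystem_cylSet) ?_ ?_).symm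
  · rintro s ⟨N, a, hN, rfl⟩
    rw [Measure.map_apply (measurable_swapF c c') (measurableSet_cylN N a),
      swapF_preimage_cylN c c' hN a, hP, hP]
  · rw [Measure.map_apply (measurable_swapF c c') MeasurableSet.univ]
    simp

lemma swapF_measure_preimage (hb2 : 2 ≤ b) (hP : ∀ (k : ℕ) (a : ℕ → Fin b),
      P {x | ∀ i < k, x i = a i} = (1 / (b : ENNReal)) ^ k)
    (c c' : Fin M → Fin b) (s : Set (ℕ → Fin b)) :
    P (swapF b M c c' ⁻¹' s) = P s := by
  have hle : ∀ t : Set (ℕ → Fin b), P (swapF b M c c' ⁻¹' t) ≤ P t := by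
    intro t
    calc P (swapF b M c c' ⁻¹' t) ≤ Measure.map (swapF b M c c') P t :=
        Measure.le_map_apply (measurable_swapF c c').aemeasurable t
    _ = P t := by rw [swapF_map_eq P hb2 hP]
  refine le_antisymm (hle s) ?_
  have := hle (swapF b M c c' ⁻¹' s)
  have he : swapF b M c c' ⁻¹' (swapF b M c c' ⁻¹' s) = s := by
    ext x
    simp [swapF_invol]
  rw [he] at this
  exact this

lemma meas_inter_split (A : Set (ℕ → Fin b)) (S : Finset (Fin M → Fin b)) :
    P (A ∩ {x | restr b M x ∈ S}) = ∑ c ∈ S, P (A ∩ {x | restr b M x = c}) := by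
  classical
  induction S using Finset.induction with
  | empty => simp
  | @insert c S hc ih =>
      have hmeas := measurableSet_cylinder (b := b) (M := M) c
      have key := MeasureTheory.measure_inter_add_diff (μ := P)
        (A ∩ {x | restr b M x ∈ insert c S}) hmeas
      have e1 : (A ∩ {x | restr b M x ∈ insert c S}) ∩ {x | restr b M x = c}
          = A ∩ {x | restr b M x = c} := by
        ext x
        simp only [Set.mem_inter_iff, Set.mem_setOf_eq, Finset.mem_insert]
        tauto
      have e2 : (A ∩ {x | restr b M x ∈ insert c S}) \ {x | restr b M x = c}
          = A ∩ {x | restr b M x ∈ S} := by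
        ext x
        simp only [Set.mem_diff, Set.mem_inter_iff, Set.mem_setOf_eq, Finset.mem_insert]
        constructor
        · rintro ⟨⟨hA, hin⟩, hne⟩
          rcases hin with h | h
          · exact absurd h hne
          · exact ⟨hA, h⟩
        · rintro ⟨hA, hin⟩
          refine ⟨⟨hA, Or.inr hin⟩, ?_⟩
          intro he
          rw [he] at hin
          exact hc hin
      rw [e1, e2] at key
      rw [Finset.sum_insert hc, ← ih]
      exact key.symm

lemma indep_high (hb2 : 2 ≤ b) (hP : ∀ (k : ℕ) (a : ℕ → Fin b),
      P {x | ∀ i < k, x i = a i} = (1 / (b : ENNReal)) ^ k)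
    (A : Set (ℕ → Fin b))
    (hA : ∀ x y : ℕ → Fin b, (∀ j, M ≤ j → x j = y j) → (x ∈ A ↔ y ∈ A))
    (S : Finset (Fin M → Fin b)) :
    P (A ∩ {x | restr b M x ∈ S}) = P A * P {x | restr b M x ∈ S} := by
  classical
  have hb : 0 < b := by omega
  haveI := P_isProb P (by omega : 0 < b) hP
  -- the common value of P (A ∩ cyl c)
  have hconst : ∀ c c' : Fin M → Fin b,
      P (A ∩ {x | restr b M x = c}) = P (A ∩ {x | restr b M x = c'}) := by
    intro c c'
    have hpre : swapF b M c c' ⁻¹' (A ∩ {x | restr b M x = c'})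
        = A ∩ {x | restr b M x = c} := by
      rw [Set.preimage_inter, swapF_preimage_cyl_swap]
      congr 1
      ext x
      simp only [Set.mem_preimage]
      exact hA _ x (fun j hj => swapF_high c c' x j hj)
    rw [← hpre, swapF_measure_preimage P hb2 hP]
  set c₀ : Fin M → Fin b := fun _ => ⟨0, hb⟩ with hc₀
  set q := P (A ∩ {x | restr b M x = c₀}) with hq
  have hsum : ∀ S' : Finset (Fin M → Fin b),
      P (A ∩ {x | restr b M x ∈ S'}) = S'.card * q := by
    intro S'
    rw [meas_inter_split,
      Finset.sum_congr rfl (fun c _ => hconst c c₀), Finset.sum_const, nsmul_eq_mul]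
  have hPA : P A = (b : ENNReal) ^ M * q := by
    have : A ∩ {x | restr b M x ∈ (Finset.univ : Finset (Fin M → Fin b))} = A := by
      ext x; simp
    rw [← this, hsum]
    congr 1
    rw [Finset.card_univ, Fintype.card_fun]
    simp
  have hcyl : ∀ c : Fin M → Fin b, P {x | restr b M x = c} = (1 / (b : ENNReal)) ^ M := by
    intro c
    have he : {x : ℕ → Fin b | restr b M x = c}
        = {x | ∀ i < M, x i = patchF b M c (fun _ => ⟨0, hb⟩) i} := by
      ext x
      simp only [Set.mem_setOf_eq, restr, funext_iff]
      constructor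
      · intro h i hi
        rw [show x i = x ((⟨i, hi⟩ : Fin M) : ℕ) from rfl, h ⟨i, hi⟩]
        simp [patchF, hi]
      · intro h i
        rw [h i i.isLt]
        simp [patchF, i.isLt]
    rw [he, hP]
  have hDS : P {x | restr b M x ∈ S} = S.card * (1 / (b : ENNReal)) ^ M := by
    have : (Set.univ : Set (ℕ → Fin b)) ∩ {x | restr b M x ∈ S} = {x | restr b M x ∈ S} := by
      simp
    rw [← this, meas_inter_split]
    have h2 : ∀ c ∈ S, P (Set.univ ∩ {x | restr b M x = c}) = (1/(b:ENNReal))^M :=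
      fun c _ => by rw [Set.univ_inter]; exact hcyl c
    rw [Finset.sum_congr rfl h2, Finset.sum_const, nsmul_eq_mul]
  rw [hsum S, hPA, hDS]
  have hbne : (b : ENNReal) ≠ 0 := by
    simp
    omega
  have hbtop : (b : ENNReal) ≠ ⊤ := by simp
  have hunit : (b : ENNReal) ^ M * (1 / (b : ENNReal)) ^ M = 1 := by
    rw [one_div, ← mul_pow, ENNReal.mul_inv_cancel hbne hbtop, one_pow]
  calc (S.card : ENNReal) * q = 1 * ((S.card : ENNReal) * q) := by rw [one_mul]
  _ = ((b : ENNReal) ^ M * (1 / (b : ENNReal)) ^ M) * ((S.card : ENNReal) * q) := by rw [hunit]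
  _ = (b : ENNReal) ^ M * q * ((S.card : ENNReal) * (1 / (b : ENNReal)) ^ M) := by ring

lemma P_cyl (hb2 : 2 ≤ b) (hP : ∀ (k : ℕ) (a : ℕ → Fin b),
      P {x | ∀ i < k, x i = a i} = (1 / (b : ENNReal)) ^ k)
    (c : Fin M → Fin b) : P {x | restr b M x = c} = (1 / (b : ENNReal)) ^ M := by
  have hb : 0 < b := by omega
  have he : {x : ℕ → Fin b | restr b M x = c}
      = {x | ∀ i < M, x i = patchF b M c (fun _ => ⟨0, hb⟩) i} := by
    ext x
    simp only [Set.mem_setOf_eq, restr, funext_iff]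
    constructor
    · intro h i hi
      rw [show x i = x ((⟨i, hi⟩ : Fin M) : ℕ) from rfl, h ⟨i, hi⟩]
      simp [patchF, hi]
    · intro h i
      rw [h i i.isLt]
      simp [patchF, i.isLt]
  rw [he, hP]

lemma P_DS (hb2 : 2 ≤ b) (hP : ∀ (k : ℕ) (a : ℕ → Fin b),
      P {x | ∀ i < k, x i = a i} = (1 / (b : ENNReal)) ^ k)
    (S : Finset (Fin M → Fin b)) :
    P {x | restr b M x ∈ S} = S.card * (1 / (b : ENNReal)) ^ M := by
  have h0 : (Set.univ : Set (ℕ → Fin b)) ∩ {x | restr b M x ∈ S} = {x | restr b M x ∈ S} :=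
    Set.univ_inter _
  rw [← h0, meas_inter_split]
  have h2 : ∀ c ∈ S, P (Set.univ ∩ {x | restr b M x = c}) = (1/(b:ENNReal))^M :=
    fun c _ => by rw [Set.univ_inter]; exact P_cyl P hb2 hP c
  rw [Finset.sum_congr rfl h2, Finset.sum_const, nsmul_eq_mul]

lemma Q_of_not_interval {BM BT BTR u W W' : ℕ} (hBM : 0 < BM)
    (hW : W ≤ W') (hW' : W' < BT) (hTR : BTR + BT ≤ BM) (hu : u < BM)
    (hnotC : ¬ (BM - BTR - BT + 1 ≤ u ∧ u < BM - BTR)) :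
    (u + (W + BTR) + (W' - W)) / BM = (u + (W + BTR)) / BM := by
  have h1 : u + (W + BTR) + (W' - W) = u + W' + BTR := by omega
  rcases Nat.lt_or_ge (u + W + BTR) BM with h | h
  · rcases Nat.lt_or_ge (u + W' + BTR) BM with h3 | h3
    · rw [h1, Nat.div_eq_of_lt h3, Nat.div_eq_of_lt (by omega)]
    · exfalso
      apply hnotC
      omega
  · have q1 : (u + (W + BTR)) / BM = 1 := Nat.div_eq_of_lt_le (by omega) (by omega)
    have q2 : (u + (W + BTR) + (W' - W)) / BM = 1 := Nat.div_eq_of_lt_le (by omega) (by omega)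
    rw [q1, q2]

lemma endgame_real {al be be' ga ze : ℝ} (hal : 0 < al) (hga : 0 ≤ ga)
    (f1 : ze ≤ al * be' + al * ga) (f2 : al * be' ≤ ze + al * ga)
    (f3 : be ≤ be' + ga) (f4 : be' ≤ be + ga) : |ze / al - be| ≤ 2 * ga := by
  have d1 : ze / al ≤ be' + ga := by
    rw [div_le_iff₀ hal]
    nlinarith
  have d2 : be' - ga ≤ ze / al := by
    rw [le_div_iff₀ hal]
    nlinarith
  rw [abs_le]
  constructor
  · nlinarith
  · nlinarith

/-- **Lemma (φ-mixing).** For every `r ≥ 1` and `k ≥ 1`, the φ-mixing coefficients of the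
finite process `(X_i^(r))_{1 ≤ i ≤ λ(r)}` satisfy `φ(k) ≤ 2·((b-1)/b)^(k/2-1)`: for every
`p ≥ 1`, every `A ∈ σ(X_i : 1 ≤ i ≤ p)` with `ℙ(A) > 0` and every
`B ∈ σ(X_i : k+p ≤ i ≤ λ(r))`, one has `|ℙ(B|A) - ℙ(B)| ≤ 2·((b-1)/b)^(k/2-1)`. -/
theorem phi_mixing_bound (b : ℕ) (hb : 2 ≤ b)
    (P : Measure (ℕ → Fin b))
    (hP : ∀ (k : ℕ) (a : ℕ → Fin b),
      P {x | ∀ i < k, x i = a i} = (1 / (b : ENNReal)) ^ k)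
    (r : ℕ) (hr : 1 ≤ r) (k : ℕ) (hk : 1 ≤ k) (p : ℕ) (hp : 1 ≤ p)
    (A B : Set (ℕ → Fin b))
    (hA : MeasurableSet[⨆ i ∈ Finset.Icc 1 p,
      MeasurableSpace.comap (Xproc b (by omega) r i) ⊤] A)
    (hPA : 0 < P A)
    (hB : MeasurableSet[⨆ i ∈ Finset.Icc (k + p) (lambB b r),
      MeasurableSpace.comap (Xproc b (by omega) r i) ⊤] B) :
    |(P (A ∩ B)).toReal / (P A).toReal - (P B).toReal| ≤
      2 * (((b : ℝ) - 1) / b) ^ ((k : ℝ) / 2 - 1) := by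
  classical
  have hb0 : 0 < b := by omega
  haveI hprob := P_isProb P hb0 hP
  have hfin : ∀ s : Set (ℕ → Fin b), P s ≠ ⊤ := fun s =>
    (lt_of_le_of_lt (measure_mono (Set.subset_univ _))
      (by rw [measure_univ]; exact ENNReal.one_lt_top)).ne
  have hαpos : 0 < (P A).toReal := ENNReal.toReal_pos hPA.ne' (hfin A)
  have hbR : (2:ℝ) ≤ (b:ℝ) := by exact_mod_cast hb
  have hcpos : (0:ℝ) < ((b:ℝ) - 1) / b := by
    apply div_pos <;> linarith
  have hcle1 : ((b:ℝ) - 1) / b ≤ 1 := by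
    rw [div_le_one (by linarith)]
    linarith
  have hRHS0 : 0 ≤ 2 * (((b : ℝ) - 1) / b) ^ ((k : ℝ) / 2 - 1) := by
    have := Real.rpow_nonneg hcpos.le ((k:ℝ)/2 - 1)
    linarith
  by_cases hcase : lambB b r < k + p
  · -- trivial case : the σ-algebra for B is trivial
    have hempty : Finset.Icc (k + p) (lambB b r) = ∅ := Finset.Icc_eq_empty (by omega)
    rw [hempty] at hB
    have hbot : (⨆ i ∈ (∅ : Finset ℕ),
        MeasurableSpace.comap (Xproc b (by omega : 0 < b) r i) ⊤)
          = (⊥ : MeasurableSpace (ℕ → Fin b)) := by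
      simp
    rw [hbot] at hB
    rcases MeasurableSpace.measurableSet_bot_iff.mp hB with rfl | rfl
    · rw [Set.inter_empty]
      simpa using hRHS0
    · rw [Set.inter_univ, measure_univ, div_self hαpos.ne']
      simpa using hRHS0
  · push_neg at hcase
    -- main case
    set lam := lambB b r with hlam
    have hnzbs : nzB (blocksOf b (Nat.digits b r)) = lam := rfl
    set bs := blocksOf b (Nat.digits b r) with hbs
    have hflat : bs.flatten = Nat.digits b r := blocksOf_flatten b _
    have hne : ∀ bl ∈ bs, bl ≠ [] := blocksOf_ne_nil b _
    have hzero : ∀ bl ∈ bs, bl.head? = some 0 → ∀ d ∈ bl, d = 0 := blocksOf_zero_head b _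
    have hdig : ∀ d ∈ bs.flatten, d < b := by
      rw [hflat]
      exact fun d hd => Nat.digits_lt_base hb hd
    obtain ⟨bsA, rest, hsp1, hnzA⟩ := exists_nzB_split bs (lam - k - p + 1) (by omega)
    have hnzrest : nzB rest = k + p - 1 := by
      have h1 := nzB_append bsA rest
      rw [← hsp1, hnzbs] at h1
      omega
    obtain ⟨bsReg, bsTop, hsp2, hnzReg⟩ := exists_nzB_split rest (k - 1) (by omega)
    set T := bsA.flatten.length with hT
    set L := bsReg.flatten.length with hL
    set Mn := T + L with hMn
    set R' := Nat.ofDigits b bsReg.flatten with hR'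
    set Rtop := Nat.ofDigits b bsTop.flatten with hRtopd
    have hsp : bs = bsA ++ (bsReg ++ bsTop) := by rw [hsp1, hsp2]
    have hsp' : bs = (bsA ++ bsReg) ++ bsTop := by rw [hsp, List.append_assoc]
    have hflat3 : bs.flatten = bsA.flatten ++ bsReg.flatten ++ bsTop.flatten := by
      rw [hsp', List.flatten_append, List.flatten_append]
    have hdigA : ∀ d ∈ bsA.flatten, d < b := fun d hd => hdig d (by rw [hflat3]; simp [hd])
    have hdigReg : ∀ d ∈ bsReg.flatten, d < b := fun d hd => hdig d (by rw [hflat3]; simp [hd])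
    have hLk : k - 1 ≤ L := by
      have h1 := nzB_le_flatten_length bsReg (fun bl hbl => hne bl (by rw [hsp]; simp [hbl]))
      omega
    have hR'lt : R' < b ^ L := Nat.ofDigits_lt_base_pow_length hb hdigReg
    have hTRmul : b ^ T * R' + b ^ T ≤ b ^ Mn := by
      have h1 : R' + 1 ≤ b ^ L := hR'lt
      calc b ^ T * R' + b ^ T = b ^ T * (R' + 1) := by ring
      _ ≤ b ^ T * b ^ L := Nat.mul_le_mul_left _ h1
      _ = b ^ Mn := by rw [hMn, pow_add]
    -- high-side representation
    have hnzAReg : nzB (bsA ++ bsReg) = lam - p := by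
      rw [nzB_append]
      omega
    have hrP_high : ∀ j, j ≤ p → rPart b r j
        = b ^ Mn * Nat.ofDigits b (zeroOutBlocks (lam - j - (lam - p)) bsTop).flatten := by
      intro j hj
      have hz1 : ∀ bl ∈ bsA ++ bsReg, bl.head? = some 0 → ∀ d ∈ bl, d = 0 := by
        intro bl hbl
        exact hzero bl (by rw [hsp']; exact List.mem_append_left _ hbl)
      have key : zeroOutBlocks (lam - j) bs
          = (bsA ++ bsReg).map (fun bl => bl.map (fun _ => 0))
            ++ zeroOutBlocks (lam - j - (lam - p)) bsTop := by
        rw [hsp', zOB_append_right _ _ _ (by rw [hnzAReg]; omega) hz1, hnzAReg]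
      show Nat.ofDigits b (zeroOutBlocks (lambB b r - j) (blocksOf b (Nat.digits b r))).flatten = _
      rw [← hbs, ← hlam, key, List.flatten_append, Nat.ofDigits_append, ← List.map_flatten,
        ofDigits_map_zero, List.length_map, List.flatten_append, List.length_append,
        ← hT, ← hL, ← hMn, zero_add]
    have hdvd_high : ∀ j, j ≤ p → b ^ Mn ∣ rPart b r j := fun j hj => ⟨_, hrP_high j hj⟩
    -- A is determined by the coordinates ≥ Mn
    have hAdet : ∀ x y : ℕ → Fin b, (∀ j, Mn ≤ j → x j = y j) → (x ∈ A ↔ y ∈ A) := by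
      let G : MeasurableSpace (ℕ → Fin b) :=
        { MeasurableSet' := fun s => ∀ x y : ℕ → Fin b, (∀ j, Mn ≤ j → x j = y j) → (x ∈ s ↔ y ∈ s)
          measurableSet_empty := fun x y _ => Iff.rfl
          measurableSet_compl := fun s hs x y hxy => not_congr (hs x y hxy)
          measurableSet_iUnion := fun f hf x y hxy => by
            simp only [Set.mem_iUnion]
            exact exists_congr fun i => hf i x y hxy }
      have hle : (⨆ i ∈ Finset.Icc 1 p,
          MeasurableSpace.comap (Xproc b hb0 r i) ⊤) ≤ G := by
        refine iSup_le fun i => iSup_le fun hi => ?_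
        rintro s ⟨s', -, rfl⟩
        intro x y hxy
        rw [Finset.mem_Icc] at hi
        simp only [Set.mem_preimage]
        rw [Xproc_high_eq hb hb0 r i Mn (hdvd_high (i-1) (by omega))
          (Nat.dvd_sub (hdvd_high i hi.2) (hdvd_high (i-1) (by omega))) x y hxy]
      exact hle A hA
    -- low-side representation
    have hrep : ∀ m, m ≤ lam - k - p + 1 →
        Nat.ofDigits b (zeroOutBlocks m bs).flatten
          = Nat.ofDigits b (zeroOutBlocks m bsA).flatten + b ^ T * R' + b ^ Mn * Rtop := by
      intro m hm
      rw [hsp, zOB_append_left bsA _ m (by rw [hnzA]; exact hm)]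
      rw [List.flatten_append, Nat.ofDigits_append, List.flatten_append, Nat.ofDigits_append]
      rw [zOB_flatten_length bsA m, ← hT, ← hL, ← hR', ← hRtopd, hMn, pow_add]
      ring
    have hW'lt : ∀ m, Nat.ofDigits b (zeroOutBlocks m bsA).flatten < b ^ T := by
      intro m
      have h1 : (zeroOutBlocks m bsA).flatten.length = T := zOB_flatten_length bsA m
      rw [← h1]
      apply Nat.ofDigits_lt_base_pow_length hb
      intro d hd
      rcases zOB_flatten_mem bsA m d hd with h2 | h2
      · omega
      · exact hdigA d h2
    -- the "carry interval" event C
    set vfin : (Fin Mn → Fin b) → ℕ := fun c => ∑ i : Fin Mn, (c i : ℕ) * b ^ (i : ℕ) with hvfin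
    have huM_vfin : ∀ x : ℕ → Fin b, uM b Mn x = vfin (restr b Mn x) := by
      intro x
      rw [uM, Finset.sum_range]
      rfl
    set SC : Finset (Fin Mn → Fin b) := Finset.univ.filter
      (fun c => b ^ Mn - b ^ T * R' - b ^ T + 1 ≤ vfin c ∧ vfin c < b ^ Mn - b ^ T * R') with hSC
    set C : Set (ℕ → Fin b) := {x | restr b Mn x ∈ SC} with hC
    -- card bound
    have hvfin_inj : Function.Injective vfin := by
      intro c c' hcc
      have h1 : ((finFunctionFinEquiv c : Fin (b ^ Mn)) : ℕ)
          = ((finFunctionFinEquiv c' : Fin (b ^ Mn)) : ℕ) := by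
        rw [finFunctionFinEquiv_apply, finFunctionFinEquiv_apply]
        exact hcc
      exact finFunctionFinEquiv.injective (Fin.val_injective h1)
    have hcard : SC.card ≤ b ^ T := by
      have h1 : SC.card ≤ (Finset.Ico (b ^ Mn - b ^ T * R' - b ^ T + 1)
          (b ^ Mn - b ^ T * R')).card := by
        apply Finset.card_le_card_of_injOn vfin
        · intro c hcin
          rw [hSC, Finset.mem_coe, Finset.mem_filter] at hcin
          rw [Finset.mem_coe, Finset.mem_Ico]
          exact hcin.2
        · exact fun a _ c _ hac => hvfin_inj hac
      rw [Nat.card_Ico] at h1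
      have h2 : ∀ BM BTR BT : ℕ, BM - BTR - (BM - BTR - BT + 1) ≤ BT := by
        intro BM BTR BT
        omega
      exact le_trans h1 (h2 (b ^ Mn) (b ^ T * R') (b ^ T))
    have hPC : P C = SC.card * (1 / (b:ENNReal)) ^ Mn := P_DS P hb hP SC
    -- φ : zero out the coordinates ≥ Mn
    set zf : ℕ → Fin b := fun _ => (⟨0, hb0⟩ : Fin b) with hzf
    set φ : (ℕ → Fin b) → (ℕ → Fin b) := fun x => patchF b Mn (restr b Mn x) zf with hφ
    have hrestrφ : ∀ x, restr b Mn (φ x) = restr b Mn x := by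
      intro x
      rw [hφ]
      exact restr_patchF _ _
    have huφ : ∀ x, uM b Mn (φ x) = uM b Mn x := by
      intro x
      rw [huM_vfin, huM_vfin, hrestrφ]
    -- Xproc is insensitive to high coordinates outside C, for i in the low range
    have hXlow : ∀ x : ℕ → Fin b, x ∉ C → ∀ i, k + p ≤ i → i ≤ lam →
        Xproc b hb0 r i x = Xproc b hb0 r i (φ x) := by
      intro x hx i hi1 hi2
      set Wi := Nat.ofDigits b (zeroOutBlocks (lam - i + 1) bsA).flatten with hWi
      set Wi' := Nat.ofDigits b (zeroOutBlocks (lam - i) bsA).flatten with hWi'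
      have hrp1 : rPart b r (i-1) = (Wi + b ^ T * R') + b ^ Mn * Rtop := by
        show Nat.ofDigits b
          (zeroOutBlocks (lambB b r - (i-1)) (blocksOf b (Nat.digits b r))).flatten = _
        rw [← hbs, ← hlam, show lam - (i-1) = lam - i + 1 by omega, hrep _ (by omega), ← hWi]
      have hrp2 : rPart b r i = (Wi' + b ^ T * R') + b ^ Mn * Rtop := by
        show Nat.ofDigits b
          (zeroOutBlocks (lambB b r - i) (blocksOf b (Nat.digits b r))).flatten = _
        rw [← hbs, ← hlam, hrep _ (by omega), ← hWi']
      have hmono : Wi ≤ Wi' := by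
        rw [hWi, hWi', show lam - i + 1 = (lam - i) + 1 from rfl]
        exact zOB_ofDigits_mono b bsA _
      have hW'lt_i : Wi' < b ^ T := hW'lt _
      have habs_sub : ∀ (X Y W1 W2 : ℕ), (W2 + X + Y) - (W1 + X + Y) = W2 - W1 := by
        intro X Y W1 W2
        omega
      have ht : rPart b r i - rPart b r (i-1) = Wi' - Wi := by
        rw [hrp2, hrp1, habs_sub]
      have habs1 : ∀ (BT BTR BM W1 W2 : ℕ), W1 ≤ W2 → W2 < BT → BTR + BT ≤ BM →
          W1 + BTR < BM := by
        intro BT BTR BM W1 W2 h1 h2 h3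
        omega
      have haL : Wi + b ^ T * R' < b ^ Mn := habs1 _ _ _ _ _ hmono hW'lt_i hTRmul
      have habs2 : ∀ (BT BTR BM W1 W2 : ℕ), W1 ≤ W2 → W2 < BT → BTR + BT ≤ BM →
          (W1 + BTR) + (W2 - W1) < BM := by
        intro BT BTR BM W1 W2 h1 h2 h3
        omega
      have haLt : (Wi + b ^ T * R') + (Wi' - Wi) < b ^ Mn :=
        habs2 _ _ _ _ _ hmono hW'lt_i hTRmul
      have hnotC : ¬ (b ^ Mn - b ^ T * R' - b ^ T + 1 ≤ uM b Mn x
          ∧ uM b Mn x < b ^ Mn - b ^ T * R') := by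
        intro hcontra
        apply hx
        rw [hC]
        show restr b Mn x ∈ SC
        rw [hSC, Finset.mem_filter]
        refine ⟨Finset.mem_univ _, ?_⟩
        rw [← huM_vfin]
        exact hcontra
      have hQx : (uM b Mn x + (Wi + b ^ T * R') + (Wi' - Wi)) / b ^ Mn
          = (uM b Mn x + (Wi + b ^ T * R')) / b ^ Mn :=
        Q_of_not_interval (by positivity) hmono hW'lt_i hTRmul (uM_lt hb0 Mn x) hnotC
      have hQφ : (uM b Mn (φ x) + (Wi + b ^ T * R') + (Wi' - Wi)) / b ^ Mn
          = (uM b Mn (φ x) + (Wi + b ^ T * R')) / b ^ Mn := by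
        rw [huφ x]
        exact hQx
      rw [Xproc_low_eval hb hb0 r i hrp1 ht haL haLt x hQx,
        Xproc_low_eval hb hb0 r i hrp1 ht haL haLt (φ x) hQφ, huφ x]
    -- B coincides with a low-determined set outside C
    have hGB : ∀ x, x ∉ C → (x ∈ B ↔ φ x ∈ B) := by
      let G : MeasurableSpace (ℕ → Fin b) :=
        { MeasurableSet' := fun s => ∀ x, x ∉ C → (x ∈ s ↔ φ x ∈ s)
          measurableSet_empty := fun x _ => Iff.rfl
          measurableSet_compl := fun s hs x hx => not_congr (hs x hx)
          measurableSet_iUnion := fun f hf x hx => by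
            simp only [Set.mem_iUnion]
            exact exists_congr fun i => hf i x hx }
      have hle : (⨆ i ∈ Finset.Icc (k + p) lam,
          MeasurableSpace.comap (Xproc b hb0 r i) ⊤) ≤ G := by
        refine iSup_le fun i => iSup_le fun hi => ?_
        rintro s ⟨s', -, rfl⟩
        intro x hx
        rw [Finset.mem_Icc] at hi
        simp only [Set.mem_preimage]
        rw [hXlow x hx i hi.1 hi.2]
      exact hle B hB
    set SB : Finset (Fin Mn → Fin b) := Finset.univ.filter
      (fun c => patchF b Mn c zf ∈ B) with hSB
    set Bt : Set (ℕ → Fin b) := {x | restr b Mn x ∈ SB} with hBtd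
    have hBtiff : ∀ x, x ∉ C → (x ∈ B ↔ x ∈ Bt) := by
      intro x hx
      have h1 : x ∈ Bt ↔ φ x ∈ B := by
        rw [hBtd]
        show restr b Mn x ∈ SB ↔ _
        rw [hSB, Finset.mem_filter]
        simp only [Finset.mem_univ, true_and]
        exact Iff.rfl
      rw [h1]
      exact hGB x hx
    -- independence
    have hPABt : P (A ∩ Bt) = P A * P Bt := indep_high P hb hP A hAdet SB
    have hPAC : P (A ∩ C) = P A * P C := indep_high P hb hP A hAdet SC
    -- inclusion estimates
    have hsub1 : A ∩ B ⊆ (A ∩ Bt) ∪ (A ∩ C) := by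
      rintro x ⟨hxA, hxB⟩
      by_cases hxC : x ∈ C
      · exact Or.inr ⟨hxA, hxC⟩
      · exact Or.inl ⟨hxA, (hBtiff x hxC).mp hxB⟩
    have hsub2 : A ∩ Bt ⊆ (A ∩ B) ∪ (A ∩ C) := by
      rintro x ⟨hxA, hxB⟩
      by_cases hxC : x ∈ C
      · exact Or.inr ⟨hxA, hxC⟩
      · exact Or.inl ⟨hxA, (hBtiff x hxC).mpr hxB⟩
    have hsub3 : B ⊆ Bt ∪ C := by
      intro x hxB
      by_cases hxC : x ∈ C
      · exact Or.inr hxC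
      · exact Or.inl ((hBtiff x hxC).mp hxB)
    have hsub4 : Bt ⊆ B ∪ C := by
      intro x hxB
      by_cases hxC : x ∈ C
      · exact Or.inr hxC
      · exact Or.inl ((hBtiff x hxC).mpr hxB)
    have e1 : P (A ∩ B) ≤ P A * P Bt + P A * P C := by
      calc P (A ∩ B) ≤ P ((A ∩ Bt) ∪ (A ∩ C)) := measure_mono hsub1
      _ ≤ P (A ∩ Bt) + P (A ∩ C) := measure_union_le _ _
      _ = P A * P Bt + P A * P C := by rw [hPABt, hPAC]
    have e2 : P A * P Bt ≤ P (A ∩ B) + P A * P C := by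
      rw [← hPABt, ← hPAC]
      calc P (A ∩ Bt) ≤ P ((A ∩ B) ∪ (A ∩ C)) := measure_mono hsub2
      _ ≤ P (A ∩ B) + P (A ∩ C) := measure_union_le _ _
    have e3 : P B ≤ P Bt + P C :=
      le_trans (measure_mono hsub3) (measure_union_le _ _)
    have e4 : P Bt ≤ P B + P C :=
      le_trans (measure_mono hsub4) (measure_union_le _ _)
    -- pass to real numbers
    have f1 : (P (A ∩ B)).toReal ≤ (P A).toReal * (P Bt).toReal
        + (P A).toReal * (P C).toReal := by
      have hf : P A * P Bt + P A * P C ≠ ⊤ :=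
        ENNReal.add_ne_top.mpr ⟨ENNReal.mul_ne_top (hfin A) (hfin Bt),
          ENNReal.mul_ne_top (hfin A) (hfin C)⟩
      have h := ENNReal.toReal_mono hf e1
      rwa [ENNReal.toReal_add (ENNReal.mul_ne_top (hfin A) (hfin Bt))
        (ENNReal.mul_ne_top (hfin A) (hfin C)), ENNReal.toReal_mul, ENNReal.toReal_mul] at h
    have f2 : (P A).toReal * (P Bt).toReal ≤ (P (A ∩ B)).toReal
        + (P A).toReal * (P C).toReal := by
      have hf : P (A ∩ B) + P A * P C ≠ ⊤ :=
        ENNReal.add_ne_top.mpr ⟨hfin _, ENNReal.mul_ne_top (hfin A) (hfin C)⟩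
      have h := ENNReal.toReal_mono hf e2
      rwa [ENNReal.toReal_add (hfin _) (ENNReal.mul_ne_top (hfin A) (hfin C)),
        ENNReal.toReal_mul, ENNReal.toReal_mul] at h
    have f3 : (P B).toReal ≤ (P Bt).toReal + (P C).toReal := by
      have hf : P Bt + P C ≠ ⊤ := ENNReal.add_ne_top.mpr ⟨hfin _, hfin _⟩
      have h := ENNReal.toReal_mono hf e3
      rwa [ENNReal.toReal_add (hfin _) (hfin _)] at h
    have f4 : (P Bt).toReal ≤ (P B).toReal + (P C).toReal := by
      have hf : P B + P C ≠ ⊤ := ENNReal.add_ne_top.mpr ⟨hfin _, hfin _⟩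
      have h := ENNReal.toReal_mono hf e4
      rwa [ENNReal.toReal_add (hfin _) (hfin _)] at h
    have hγ0 : 0 ≤ (P C).toReal := ENNReal.toReal_nonneg
    have hmain : |(P (A ∩ B)).toReal / (P A).toReal - (P B).toReal|
        ≤ 2 * (P C).toReal := endgame_real hαpos hγ0 f1 f2 f3 f4
    -- bound on P C
    have hγbound : (P C).toReal ≤ (1 / (b:ℝ)) ^ L := by
      have h1 : (P C).toReal = (SC.card : ℝ) * (1 / (b:ℝ)) ^ Mn := by
        rw [hPC, ENNReal.toReal_mul, ENNReal.toReal_pow, ENNReal.toReal_div]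
        simp
      rw [h1]
      have h2 : (SC.card : ℝ) ≤ ((b:ℝ)) ^ T := by
        have := hcard
        exact_mod_cast this
      have hbne : (b:ℝ) ≠ 0 := by linarith
      have h3 : (1 / (b:ℝ)) ^ Mn = (1 / (b:ℝ)) ^ T * (1 / (b:ℝ)) ^ L := by
        rw [hMn, pow_add]
      have h4 : (0:ℝ) ≤ (1 / (b:ℝ)) ^ Mn := by positivity
      calc (SC.card : ℝ) * (1 / (b:ℝ)) ^ Mn ≤ (b:ℝ) ^ T * (1 / (b:ℝ)) ^ Mn := by
            apply mul_le_mul_of_nonneg_right h2 h4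
      _ = ((b:ℝ) ^ T * (1 / (b:ℝ)) ^ T) * (1 / (b:ℝ)) ^ L := by rw [h3]; ring
      _ = (1 / (b:ℝ)) ^ L := by
            rw [← mul_pow]
            rw [mul_one_div, div_self hbne, one_pow, one_mul]
    -- chain of inequalities to the announced bound
    have hchain : (1 / (b:ℝ)) ^ L ≤ (((b:ℝ) - 1) / b) ^ ((k : ℝ) / 2 - 1) := by
      have h1 : (1 / (b:ℝ)) ≤ ((b:ℝ) - 1) / b := by
        gcongr <;> linarith
      have h2 : (1/(b:ℝ))^L ≤ (((b:ℝ)-1)/b)^L := by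
        apply pow_le_pow_left₀ (by positivity) h1
      have h3 : (((b:ℝ)-1)/b)^L ≤ (((b:ℝ)-1)/b)^(k-1) :=
        pow_le_pow_of_le_one hcpos.le hcle1 hLk
      have h4 : (((b:ℝ)-1)/b)^((k-1:ℕ)) = (((b:ℝ)-1)/b) ^ (((k-1:ℕ):ℕ):ℝ) :=
        (Real.rpow_natCast _ _).symm
      have h5 : (((b:ℝ)-1)/b) ^ (((k-1:ℕ)):ℝ) ≤ (((b:ℝ)-1)/b) ^ ((k:ℝ)/2 - 1) := by
        apply Real.rpow_le_rpow_of_exponent_ge hcpos hcle1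
        have hcast : ((k-1:ℕ):ℝ) = (k:ℝ) - 1 := by
          rw [Nat.cast_sub hk]
          simp
        rw [hcast]
        have hk1 : (1:ℝ) ≤ (k:ℝ) := by exact_mod_cast hk
        linarith
      calc (1/(b:ℝ))^L ≤ (((b:ℝ)-1)/b)^L := h2
      _ ≤ (((b:ℝ)-1)/b)^(k-1) := h3
      _ = (((b:ℝ)-1)/b) ^ (((k-1:ℕ)):ℝ) := h4
      _ ≤ _ := h5
    calc |(P (A ∩ B)).toReal / (P A).toReal - (P B).toReal| ≤ 2 * (P C).toReal := hmain
    _ ≤ 2 * (1 / (b:ℝ)) ^ L := by linarith [hγbound]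
    _ ≤ 2 * (((b : ℝ) - 1) / b) ^ ((k : ℝ) / 2 - 1) := by linarith [hchain]
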